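/- arXiv:2005.13597 — 2 statements merged into one kernel-verified Lean document; each statement's English description precedes it below -/
import Mathlib

section
/- The van der Corput sequence (e^{iθ_n}) is equidistributed on the unit circle: for every arc A ⊆ S¹, the fraction of points e^{iθ_n} with n < N lying in A converges to ℓ(A)/(2π) as N → ∞. -/
/-- Binary radical inverse of n: if n = ∑ a_j 2^j then r n = ∑ a_j 2^{-j-1} ∈ [0,1). -/
noncomputable def radicalInverse (n : ℕ) : ℝ :=
  ∑ i ∈ Finset.range (n + 1), if n.testBit i then ((2:ℝ) ^ (i + 1))⁻¹ else 0

/-- The van der Corput angle θ_n = 2π r(n) ∈ [0, 2π). -/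
noncomputable def theta (n : ℕ) : ℝ := 2 * Real.pi * radicalInverse n

open Finset

lemma radicalInverse_eq (n K : ℕ) (h : n < 2 ^ K) :
    radicalInverse n = ∑ i ∈ range K, if n.testBit i then ((2:ℝ) ^ (i + 1))⁻¹ else 0 := by
  have ext : ∀ A B : ℕ, A ≤ B → n < 2 ^ A →
      (∑ i ∈ range B, if n.testBit i then ((2:ℝ) ^ (i + 1))⁻¹ else 0)
      = ∑ i ∈ range A, if n.testBit i then ((2:ℝ) ^ (i + 1))⁻¹ else 0 := by
    intro A B hAB hA
    refine (Finset.sum_subset (Finset.range_subset_range.2 hAB) ?_).symm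
    intro i _ hi
    have : n < 2 ^ i := lt_of_lt_of_le hA (Nat.pow_le_pow_right (by norm_num)
      (le_of_not_gt (fun hc => hi (Finset.mem_range.2 hc))))
    simp [Nat.testBit_eq_false_of_lt this]
  have hn1 : n < 2 ^ (n + 1) := lt_of_lt_of_le (n.lt_two_pow_self)
    (Nat.pow_le_pow_right (by norm_num) (Nat.le_succ n))
  rw [radicalInverse, ← ext (n+1) (max (n+1) K) (le_max_left _ _) hn1,
    ext K (max (n+1) K) (le_max_right _ _) h]

lemma radicalInverse_nonneg (n : ℕ) : 0 ≤ radicalInverse n := by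
  apply Finset.sum_nonneg; intro i _; split <;> positivity

lemma sum_pow_half (K : ℕ) : (∑ i ∈ range K, ((2:ℝ) ^ (i + 1))⁻¹) = 1 - ((2:ℝ)^K)⁻¹ := by
  induction K with
  | zero => simp
  | succ k ih =>
    rw [Finset.sum_range_succ, ih]
    have h2 : (2:ℝ) ^ k ≠ 0 := by positivity
    field_simp
    ring

lemma radicalInverse_lt_one (n : ℕ) : radicalInverse n < 1 := by
  have h1 : radicalInverse n ≤ ∑ i ∈ range (n+1), ((2:ℝ) ^ (i + 1))⁻¹ := by
    apply Finset.sum_le_sum; intro i _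
    split
    · exact le_refl _
    · positivity
  have := sum_pow_half (n+1)
  nlinarith [inv_pos.2 (pow_pos (by norm_num : (0:ℝ) < 2) (n+1))]

lemma radicalInverse_two_pow_add (k m : ℕ) (hm : m < 2 ^ k) :
    radicalInverse (2 ^ k + m) = ((2:ℝ) ^ (k + 1))⁻¹ + radicalInverse m := by
  have h1 : 2 ^ k + m < 2 ^ (k + 1) := by
    rw [pow_succ]; omega
  rw [radicalInverse_eq _ _ h1, radicalInverse_eq m k hm, Finset.sum_range_succ]
  have hbit : (2 ^ k + m).testBit k = true := by
    rw [Nat.testBit_two_pow_add_eq, Nat.testBit_eq_false_of_lt hm]; rfl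
  rw [hbit]
  have : ∀ i ∈ range k, (if (2 ^ k + m).testBit i then ((2:ℝ) ^ (i + 1))⁻¹ else 0)
      = if m.testBit i then ((2:ℝ) ^ (i + 1))⁻¹ else 0 := by
    intro i hi
    rw [Nat.testBit_two_pow_add_gt (Finset.mem_range.1 hi)]
  rw [Finset.sum_congr rfl this]
  simp [add_comm]

lemma radicalInverse_zero : radicalInverse 0 = 0 := by
  simp [radicalInverse]

lemma ceil_half_identity (u : ℝ) (hu : 0 ≤ u) :
    ⌈u⌉ + ⌈max 0 (u - 1/2)⌉ = ⌈2 * u⌉ := by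
  rcases eq_or_lt_of_le hu with h0 | h0
  · simp [← h0]
  by_cases h12 : u ≤ 1/2
  · have hmax : max 0 (u - 1/2) = (0:ℝ) := by apply max_eq_left; linarith
    have hcu : ⌈u⌉ = 1 := by
      rw [Int.ceil_eq_iff]; push_cast; constructor <;> linarith
    have hc2 : ⌈2*u⌉ = 1 := by
      rw [Int.ceil_eq_iff]; push_cast; constructor <;> linarith
    rw [hmax, hcu, hc2]; norm_num
  · push_neg at h12
    have hmax : max 0 (u - 1/2) = u - 1/2 := by apply max_eq_right; linarith
    rw [hmax]
    set m : ℤ := ⌈u⌉ with hm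
    have h1 : (m:ℝ) - 1 < u := by
      have := Int.ceil_lt_add_one u; rw [← hm] at this; linarith
    have h2 : u ≤ (m:ℝ) := Int.le_ceil u
    by_cases hc : u ≤ (m:ℝ) - 1/2
    · have hcA : ⌈u - 1/2⌉ = m - 1 := by
        rw [Int.ceil_eq_iff]; push_cast; constructor <;> linarith
      have hcB : ⌈2*u⌉ = 2*m - 1 := by
        rw [Int.ceil_eq_iff]; push_cast; constructor <;> linarith
      rw [hcA, hcB]; ring
    · push_neg at hc
      have hcA : ⌈u - 1/2⌉ = m := by
        rw [Int.ceil_eq_iff]; push_cast; constructor <;> linarith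
      have hcB : ⌈2*u⌉ = 2*m := by
        rw [Int.ceil_eq_iff]; push_cast; constructor <;> linarith
      rw [hcA, hcB]; ring

lemma card_filter_range_add (a b : ℕ) (p : ℕ → Prop) [DecidablePred p] :
    ((range (a+b)).filter p).card
      = ((range a).filter p).card + ((range b).filter (fun i => p (a + i))).card := by
  induction b with
  | zero => simp
  | succ n ih =>
    rw [← Nat.add_assoc, Finset.range_add_one, Finset.filter_insert, Finset.range_add_one,
      Finset.filter_insert]
    by_cases h : p (a + n)
    · rw [if_pos h, if_pos h, Finset.card_insert_of_notMem (by simp), Finset.card_insert_of_notMem (by simp), ih]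
      omega
    · rw [if_neg h, if_neg h, ih]

lemma shift_mem_iff (k m : ℕ) (α β : ℝ) (hm : m < 2 ^ k) :
    (radicalInverse (2 ^ k + m) ∈ Set.Ico α β)
      ↔ radicalInverse m ∈ Set.Ico (max 0 (α - ((2:ℝ) ^ (k+1))⁻¹)) (max 0 (β - ((2:ℝ) ^ (k+1))⁻¹)) := by
  rw [radicalInverse_two_pow_add k m hm]
  have h0 := radicalInverse_nonneg m
  set r := radicalInverse m
  set h : ℝ := ((2:ℝ) ^ (k+1))⁻¹
  simp only [Set.mem_Ico]
  constructor
  · rintro ⟨h1, h2⟩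
    exact ⟨max_le h0 (by linarith), lt_of_lt_of_le (by linarith) (le_max_right _ _)⟩
  · rintro ⟨h1, h2⟩
    have hb : r < β - h := lt_of_lt_of_le h2 (by
      rcases le_or_gt 0 (β - h) with hb | hb
      · rw [max_eq_right hb]
      · exfalso; rw [max_eq_left (le_of_lt hb)] at h2; linarith)
    have ha : α - h ≤ r := by
      rcases le_or_gt 0 (α - h) with hx | hx
      · rw [max_eq_right hx] at h1; exact h1
      · linarith
    constructor <;> [linarith; linarith]

lemma grid_count (k : ℕ) : ∀ α β : ℝ, 0 ≤ α → α ≤ β → β ≤ 1 →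
    ((((range (2^k)).filter (fun n => radicalInverse n ∈ Set.Ico α β)).card : ℤ)
      = ⌈(2:ℝ)^k * β⌉ - ⌈(2:ℝ)^k * α⌉) := by
  induction k with
  | zero =>
    intro α β hα hαβ hβ
    have : range (2^0) = {0} := rfl
    rw [this]
    simp only [Finset.filter_singleton, radicalInverse_zero, pow_zero, one_mul]
    by_cases h : (0:ℝ) ∈ Set.Ico α β
    · rw [if_pos h]
      obtain ⟨h1, h2⟩ := h
      have hα0 : α = 0 := le_antisymm h1 hα
      have : ⌈β⌉ = 1 := by rw [Int.ceil_eq_iff] <;> push_cast <;> constructor <;> linarith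
      simp [hα0, this]
    · rw [if_neg h]
      simp only [Set.mem_Ico, not_and, not_lt] at h
      rcases lt_or_eq_of_le hα with h0 | h0
      · have h1 : ⌈α⌉ = 1 := by rw [Int.ceil_eq_iff]; push_cast; constructor <;> linarith
        have h2 : ⌈β⌉ = 1 := by rw [Int.ceil_eq_iff]; push_cast; constructor <;> linarith
        simp [h1, h2]
      · have hβ0 : β ≤ 0 := h (le_of_eq h0.symm)
        have hβ0' : β = 0 := le_antisymm hβ0 (by linarith)
        have h0' : α = 0 := by linarith
        simp [h0', hβ0']
  | succ k ih =>
    intro α β hα hαβ hβ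
    have hsplit : (2:ℕ)^(k+1) = 2^k + 2^k := by ring
    rw [hsplit, card_filter_range_add]
    set h : ℝ := ((2:ℝ) ^ (k+1))⁻¹ with hh
    have hcongr : (range (2^k)).filter (fun i => radicalInverse (2^k + i) ∈ Set.Ico α β)
        = (range (2^k)).filter (fun i => radicalInverse i ∈ Set.Ico (max 0 (α - h)) (max 0 (β - h))) := by
      apply Finset.filter_congr
      intro m hm
      exact shift_mem_iff k m α β (Finset.mem_range.1 hm)
    rw [hcongr]
    have hab'' : max 0 (α - h) ≤ max 0 (β - h) := max_le_max (le_refl 0) (by linarith)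
    have hb1 : max 0 (β - h) ≤ 1 := max_le (by norm_num) (by
      have : 0 < h := by positivity
      linarith)
    push_cast
    rw [ih α β hα hαβ hβ, ih _ _ (le_max_left _ _) hab'' hb1]
    have e1 : (2:ℝ)^k * max 0 (β - h) = max 0 ((2:ℝ)^k * β - 1/2) := by
      rw [hh]
      rw [mul_max_of_nonneg _ _ (by positivity : (0:ℝ) ≤ (2:ℝ)^k)]
      congr 1
      · ring
      · rw [mul_sub]; congr 1
        rw [pow_succ]
        field_simp
    have e2 : (2:ℝ)^k * max 0 (α - h) = max 0 ((2:ℝ)^k * α - 1/2) := by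
      rw [hh, mul_max_of_nonneg _ _ (by positivity : (0:ℝ) ≤ (2:ℝ)^k)]
      congr 1
      · ring
      · rw [mul_sub]; congr 1
        rw [pow_succ]; field_simp
    rw [e1, e2]
    have i1 := ceil_half_identity ((2:ℝ)^k * β)
      (mul_nonneg (by positivity) (le_trans hα hαβ))
    have i2 := ceil_half_identity ((2:ℝ)^k * α) (mul_nonneg (by positivity) hα)
    have e3 : (2:ℝ)^(k+1) * β = 2 * ((2:ℝ)^k * β) := by ring
    have e4 : (2:ℝ)^(k+1) * α = 2 * ((2:ℝ)^k * α) := by ring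
    rw [e3, e4, ← i1, ← i2]
    push_cast
    ring

lemma main_bound : ∀ k : ℕ, ∀ N : ℕ, N < 2^k → ∀ α β : ℝ, 0 ≤ α → α ≤ β → β ≤ 1 →
    |(((range N).filter (fun n => radicalInverse n ∈ Set.Ico α β)).card : ℝ) - N*(β-α)|
      ≤ 2*k := by
  intro k
  induction k with
  | zero =>
    intro N hN α β hα hαβ hβ
    interval_cases N
    simp
  | succ k ih =>
    intro N hN α β hα hαβ hβ
    by_cases hN2 : N < 2^k
    · refine le_trans (ih N hN2 α β hα hαβ hβ) ?_
      push_cast; linarith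
    · push_neg at hN2
      set M := N - 2^k with hM
      have hNM : N = 2^k + M := by
        rw [hM]; omega
      have hMlt : M < 2^k := by rw [pow_succ] at hN; omega
      set h : ℝ := ((2:ℝ) ^ (k+1))⁻¹ with hh
      have hpos : 0 < h := by rw [hh]; positivity
      set α' := max 0 (α - h) with hα'
      set β' := max 0 (β - h) with hβ'
      have hcard : ((range N).filter (fun n => radicalInverse n ∈ Set.Ico α β)).card
          = ((range (2^k)).filter (fun n => radicalInverse n ∈ Set.Ico α β)).card
            + ((range M).filter (fun n => radicalInverse n ∈ Set.Ico α' β')).card := by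
        rw [hNM, card_filter_range_add]
        congr 1
        refine congrArg Finset.card (Finset.filter_congr ?_)
        intro m hm
        exact shift_mem_iff k m α β (lt_of_lt_of_le (Finset.mem_range.1 hm) (le_of_lt hMlt))
      set A := ((range (2^k)).filter (fun n => radicalInverse n ∈ Set.Ico α β)).card with hA
      set B := ((range M).filter (fun n => radicalInverse n ∈ Set.Ico α' β')).card with hB
      set C := ((range N).filter (fun n => radicalInverse n ∈ Set.Ico α β)).card with hC
      have hg := grid_count k α β hα hαβ hβ
      have hceil1 : ((2:ℝ)^k * β) ≤ (⌈(2:ℝ)^k * β⌉ : ℝ) := Int.le_ceil _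
      have hceil2 : ((⌈(2:ℝ)^k * β⌉ : ℝ)) < (2:ℝ)^k * β + 1 := Int.ceil_lt_add_one _
      have hceil3 : ((2:ℝ)^k * α) ≤ (⌈(2:ℝ)^k * α⌉ : ℝ) := Int.le_ceil _
      have hceil4 : ((⌈(2:ℝ)^k * α⌉ : ℝ)) < (2:ℝ)^k * α + 1 := Int.ceil_lt_add_one _
      have hgR : ((((range (2^k)).filter (fun n => radicalInverse n ∈ Set.Ico α β)).card : ℝ))
          = (⌈(2:ℝ)^k * β⌉ : ℝ) - (⌈(2:ℝ)^k * α⌉ : ℝ) := by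
        exact_mod_cast congrArg (fun z : ℤ => (z:ℝ)) hg
      have hgrid := abs_le.1 (show |(((range (2^k)).filter
            (fun n => radicalInverse n ∈ Set.Ico α β)).card : ℝ) - (2:ℝ)^k * (β - α)| ≤ 1 by
        rw [hgR, abs_le]
        constructor <;> nlinarith)
      have hab' : α' ≤ β' := max_le_max (le_refl 0) (by linarith)
      have hb1' : β' ≤ 1 := max_le (by norm_num) (by linarith)
      have hIH := abs_le.1 (ih M hMlt α' β' (le_max_left _ _) hab' hb1')
      have hlen : |(β' - α') - (β - α)| ≤ h := by
        rcases le_or_gt 0 (α - h) with h1 | h1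
        · have h2 : 0 ≤ β - h := by linarith
          rw [hα', hβ', max_eq_right h1, max_eq_right h2,
            show (β - h - (α - h)) - (β - α) = 0 by ring, abs_zero]
          linarith
        · rcases le_or_gt 0 (β - h) with h2 | h2
          · rw [hα', hβ', max_eq_left (le_of_lt h1), max_eq_right h2]
            rw [abs_le]; constructor <;> linarith
          · rw [hα', hβ', max_eq_left (le_of_lt h1), max_eq_left (le_of_lt h2)]
            rw [abs_le]; constructor <;> linarith
      have hlen2 := abs_le.1 hlen
      have hMle : (M:ℝ) ≤ (2:ℝ)^k := by
        exact_mod_cast le_of_lt (by exact_mod_cast hMlt : (M:ℝ) < ((2:ℕ)^k : ℝ))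
      have hMnn : (0:ℝ) ≤ (M:ℝ) := Nat.cast_nonneg M
      have hhalf : (2:ℝ)^k * h = 1/2 := by
        rw [hh, pow_succ]
        field_simp
      have hMh : (M:ℝ) * h ≤ 1/2 := by
        calc (M:ℝ) * h ≤ (2:ℝ)^k * h := mul_le_mul_of_nonneg_right hMle hpos.le
        _ = 1/2 := hhalf
      have hNr : (N:ℝ) = (2:ℝ)^k + (M:ℝ) := by
        rw [hNM]; push_cast; ring
      have hd2 : (M:ℝ) * ((β' - α') - (β - α)) ≤ (M:ℝ) * h :=
        mul_le_mul_of_nonneg_left hlen2.2 hMnn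
      have hd1 : -((M:ℝ) * h) ≤ (M:ℝ) * ((β' - α') - (β - α)) := by
        have := mul_le_mul_of_nonneg_left hlen2.1 hMnn
        rw [mul_neg] at this
        exact this
      have expand1 : (M:ℝ) * ((β' - α') - (β - α))
          = (M:ℝ) * (β' - α') - (M:ℝ) * (β - α) := by ring
      have expand2 : ((2:ℝ)^k + (M:ℝ)) * (β - α)
          = (2:ℝ)^k * (β - α) + (M:ℝ) * (β - α) := by ring
      have hCr : (C:ℝ) = (A:ℝ) + (B:ℝ) := by rw [hcard]; push_cast; ring
      have hRHS : (2:ℝ) * ((k:ℕ)+1 : ℕ) = 2*(k:ℝ) + 2 := by push_cast; ring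
      rw [hRHS, abs_le, hCr, hNr]
      constructor <;>
        linarith [hIH.1, hIH.2, hgrid.1, hgrid.2, hd1, hd2, hMh, hpos.le]


lemma log_ratio_tendsto :
    Filter.Tendsto (fun x : ℝ => (2 * Real.logb 2 x + 4) / x) Filter.atTop (nhds 0) := by
  have hlog2 : Real.log 2 ≠ 0 := by
    have := Real.log_pos (by norm_num : (1:ℝ) < 2); linarith
  have h1 : Filter.Tendsto (fun x : ℝ => Real.log x / x) Filter.atTop (nhds 0) :=
    Real.isLittleO_log_id_atTop.tendsto_div_nhds_zero
  have h2 : Filter.Tendsto (fun x : ℝ => x⁻¹) Filter.atTop (nhds 0) :=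
    tendsto_inv_atTop_zero
  have h3 := (h1.const_mul (2 / Real.log 2)).add (h2.const_mul 4)
  rw [mul_zero, mul_zero, add_zero] at h3
  refine h3.congr' ?_
  filter_upwards [Filter.eventually_gt_atTop 0] with x hx
  rw [Real.logb]
  field_simp

/-- Equidistribution of the van der Corput sequence: for every arc
{e^{iφ} : a ≤ φ < b}, the fraction of the first N points lying in it tends
to (b - a)/(2π). -/
theorem vdc_equidistributed (a b : ℝ) (ha : 0 ≤ a) (hab : a ≤ b) (hb : b ≤ 2 * Real.pi) :
    Filter.Tendsto
      (fun N : ℕ =>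
        (((Finset.range N).filter (fun n => theta n ∈ Set.Ico a b)).card : ℝ) / N)
      Filter.atTop (nhds ((b - a) / (2 * Real.pi))) := by
  have h2pi : (0:ℝ) < 2 * Real.pi := by positivity
  set α := a / (2 * Real.pi) with hαdef
  set β := b / (2 * Real.pi) with hβdef
  have hα : 0 ≤ α := div_nonneg ha h2pi.le
  have hαβ : α ≤ β := by rw [hαdef, hβdef]; gcongr
  have hβ : β ≤ 1 := by
    rw [hβdef, div_le_one h2pi]; exact hb
  have hL : (b - a) / (2 * Real.pi) = β - α := by
    rw [hαdef, hβdef, sub_div]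
  -- rewrite the predicate
  have hfilter : ∀ N : ℕ, (Finset.range N).filter (fun n => theta n ∈ Set.Ico a b)
      = (Finset.range N).filter (fun n => radicalInverse n ∈ Set.Ico α β) := by
    intro N
    apply Finset.filter_congr
    intro n _
    simp only [theta, Set.mem_Ico]
    rw [hαdef, hβdef, div_le_iff₀ h2pi, lt_div_iff₀ h2pi]
    constructor <;> rintro ⟨h1, h2⟩ <;>
      exact ⟨by linarith [mul_comm (radicalInverse n) (2 * Real.pi)],
        by linarith [mul_comm (radicalInverse n) (2 * Real.pi)]⟩
  rw [hL]
  rw [show (fun N : ℕ =>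
        (((Finset.range N).filter (fun n => theta n ∈ Set.Ico a b)).card : ℝ) / N)
      = (fun N : ℕ =>
        (((Finset.range N).filter (fun n => radicalInverse n ∈ Set.Ico α β)).card : ℝ) / N)
    from funext (fun N => by rw [hfilter N])]
  rw [← tendsto_sub_nhds_zero_iff]
  apply squeeze_zero_norm' (a := fun N : ℕ => (2 * Real.logb 2 N + 4) / N)
  · filter_upwards [Filter.eventually_ge_atTop 1] with N hN
    have hN0 : (0:ℝ) < (N:ℝ) := by exact_mod_cast hN
    set k := Nat.log 2 N + 1 with hk
    have hNk : N < 2 ^ k := Nat.lt_pow_succ_log_self (by norm_num) N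
    have hmb := main_bound k N hNk α β hα hαβ hβ
    have hstep : |(((Finset.range N).filter
          (fun n => radicalInverse n ∈ Set.Ico α β)).card : ℝ) / N - (β - α)|
        ≤ 2 * (k:ℝ) / N := by
      rw [show (((Finset.range N).filter
            (fun n => radicalInverse n ∈ Set.Ico α β)).card : ℝ) / N - (β - α)
          = ((((Finset.range N).filter
            (fun n => radicalInverse n ∈ Set.Ico α β)).card : ℝ) - N * (β - α)) / N by
        field_simp]
      rw [abs_div, abs_of_pos hN0]
      gcongr
    have hlogle : ((Nat.log 2 N : ℕ) : ℝ) ≤ Real.logb 2 N := by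
      have hpow : (2:ℝ) ^ (Nat.log 2 N) ≤ (N:ℝ) := by
        exact_mod_cast Nat.pow_log_le_self 2 (Nat.one_le_iff_ne_zero.1 hN)
      rw [Real.le_logb_iff_rpow_le (by norm_num) (lt_of_lt_of_le (by positivity) hpow)]
      rwa [Real.rpow_natCast]
    rw [Real.norm_eq_abs]
    refine le_trans hstep ?_
    have hknum : 2 * (k:ℝ) ≤ 2 * Real.logb 2 N + 4 := by
      rw [hk]; push_cast; linarith
    gcongr
  · exact log_ratio_tendsto.comp tendsto_natCast_atTop_atTop
end

section
/- Let h : ℂ → ℝ be a continuous compactly supported nonnegative function. If h is symmetric under reflection across the real axis and under reflection across each line through the origin at angle α_j, where (α_j) is a sequence of nonzero angles in ℝ/(2πℤ) converging to 0, then h is radial, i.e., h(z) depends only on |z|. -/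
theorem reflections_force_radial (h : ℂ → ℝ)
    (hc : Continuous h) (hs : HasCompactSupport h) (h0 : ∀ z, 0 ≤ h z)
    (hre : ∀ z : ℂ, h (starRingEnd ℂ z) = h z)
    (α : ℕ → ℝ)
    (hα0 : ∀ j, ((α j : ℝ) : AddCircle (2 * Real.pi)) ≠ 0)
    (hαlim : Filter.Tendsto (fun j => ((α j : ℝ) : AddCircle (2 * Real.pi)))
      Filter.atTop (nhds 0))
    (hrefl : ∀ j, ∀ z : ℂ,
      h (Complex.exp (2 * (α j : ℂ) * Complex.I) * starRingEnd ℂ z) = h z) :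
    ∀ z w : ℂ, ‖z‖ = ‖w‖ → h z = h w := by
  -- rotation invariance by 2 α j
  have hrot : ∀ j, ∀ z : ℂ, h (Complex.exp (2 * (α j : ℂ) * Complex.I) * z) = h z := by
    intro j z
    have := hrefl j (starRingEnd ℂ z)
    rwa [Complex.conj_conj, hre z] at this
  -- the additive subgroup of invariance angles
  set S : AddSubgroup ℝ :=
    { carrier := {θ : ℝ | ∀ z, h (Complex.exp (θ * Complex.I) * z) = h z}
      add_mem' := by
        intro a b ha hb z
        have : ((a + b : ℝ) : ℂ) * Complex.I = a * Complex.I + b * Complex.I := by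
          push_cast; ring
        rw [this, Complex.exp_add, mul_assoc]
        rw [ha (Complex.exp (b * Complex.I) * z), hb z]
      zero_mem' := by intro z; simp
      neg_mem' := by
        intro a ha z
        have := ha (Complex.exp ((-a : ℝ) * Complex.I) * z)
        rw [← mul_assoc, ← Complex.exp_add] at this
        have e : (a : ℂ) * Complex.I + (-a : ℝ) * Complex.I = 0 := by push_cast; ring
        rw [e, Complex.exp_zero, one_mul] at this
        exact this.symm } with hS
  have hSmem : ∀ θ, θ ∈ S ↔ ∀ z, h (Complex.exp (θ * Complex.I) * z) = h z := fun θ => Iff.rfl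
  -- S is closed
  have hclosed : IsClosed (S : Set ℝ) := by
    have : (S : Set ℝ) = ⋂ z : ℂ, {θ : ℝ | h (Complex.exp (θ * Complex.I) * z) = h z} := by
      ext θ; simp [hSmem, Set.mem_iInter]
    rw [this]
    refine isClosed_iInter fun z => isClosed_eq ?_ continuous_const
    exact hc.comp (((Complex.continuous_exp.comp
      (Complex.continuous_ofReal.mul continuous_const)).mul continuous_const))
  -- 2π ∈ S
  have h2pi : (2 * Real.pi) ∈ S := by
    intro z
    have : ((2 * Real.pi : ℝ) : ℂ) * Complex.I = 2 * Real.pi * Complex.I := by push_cast; ring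
    rw [this, Complex.exp_two_pi_mul_I, one_mul]
  -- 2 α j ∈ S
  have h2a : ∀ j, (2 * α j) ∈ S := by
    intro j z
    have : ((2 * α j : ℝ) : ℂ) * Complex.I = 2 * (α j : ℂ) * Complex.I := by push_cast; ring
    rw [this]; exact hrot j z
  have hπ : (0 : ℝ) < 2 * Real.pi := by positivity
  -- S is dense
  have hdense : Dense (S : Set ℝ) := by
    refine S.dense_of_not_isolated_zero fun ε hε => ?_
    have : ∀ᶠ j in Filter.atTop,
        dist ((α j : ℝ) : AddCircle (2 * Real.pi)) 0 < ε / 2 :=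
      Metric.tendsto_nhds.mp hαlim (ε / 2) (by linarith)
    obtain ⟨j, hj⟩ := this.exists
    rw [dist_zero_right, AddCircle.norm_eq] at hj
    set b : ℝ := α j - round ((2 * Real.pi)⁻¹ * α j) * (2 * Real.pi) with hb
    have hbne : b ≠ 0 := by
      intro hb0
      apply hα0 j
      have : (α j : ℝ) = round ((2 * Real.pi)⁻¹ * α j) * (2 * Real.pi) := by
        have := hb0; rw [hb] at this; linarith
      rw [this]
      rw [AddCircle.coe_eq_zero_iff]
      exact ⟨round ((2 * Real.pi)⁻¹ * α j), by rw [zsmul_eq_mul]⟩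
    have h2b : (2 * b) ∈ S := by
      have : 2 * b = 2 * α j + (-(2 * round ((2 * Real.pi)⁻¹ * α j))) • (2 * Real.pi) := by
        rw [hb]; push_cast [zsmul_eq_mul]; ring
      rw [this]
      exact S.add_mem (h2a j) (S.zsmul_mem h2pi _)
    refine ⟨|2 * b|, ?_, ?_, ?_⟩
    · rcases abs_choice (2 * b) with hch | hch <;> rw [hch]
      · exact h2b
      · exact S.neg_mem h2b
    · exact abs_pos.mpr (by simpa using hbne)
    · have : |2 * b| = 2 * |b| := by rw [abs_mul]; simp
      rw [this, hb]; linarith [hj]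
  -- S = ℝ
  have hall : ∀ θ : ℝ, θ ∈ S := by
    intro θ
    have hu : (S : Set ℝ) = Set.univ := by
      rw [← hclosed.closure_eq]; exact hdense.closure_eq
    have : θ ∈ (S : Set ℝ) := hu ▸ Set.mem_univ θ
    exact this
  -- conclude
  intro z w habs
  rcases eq_or_ne z 0 with rfl | hz
  · have : w = 0 := by
      have := habs.symm
      rwa [norm_zero, norm_eq_zero] at this
    rw [this]
  · have h1 : ‖w / z‖ = 1 := by
      rw [norm_div, ← habs, div_self]
      exact norm_ne_zero_iff.mpr hz
    obtain ⟨θ, hθ⟩ := (Complex.norm_eq_one_iff _).mp h1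
    have := hall θ z
    rw [hθ, div_mul_cancel₀ w hz] at this
    exact this.symm
end
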